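/- Let m : A → [0,∞) be null-additive and monotone and A ∈ A an atom of m. If f : T → X is Gould m-integrable on A, then f is m-totally-measurable on A. -/

import Mathlib

open Set ENNReal

variable {T : Type*}

/-- `𝒜` is an algebra of subsets of `T`. -/
def IsSetAlgebra' (𝒜 : Set (Set T)) : Prop :=
  ∅ ∈ 𝒜 ∧ (∀ A ∈ 𝒜, Aᶜ ∈ 𝒜) ∧ ∀ A ∈ 𝒜, ∀ B ∈ 𝒜, A ∪ B ∈ 𝒜

/-- `m` is monotone on `𝒜`. -/
def MonoSF (m : Set T → ℝ) (𝒜 : Set (Set T)) : Prop :=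
  ∀ A ∈ 𝒜, ∀ B ∈ 𝒜, A ⊆ B → m A ≤ m B

/-- `m` is subadditive on `𝒜`. -/
def SubaddSF (m : Set T → ℝ) (𝒜 : Set (Set T)) : Prop :=
  ∀ A ∈ 𝒜, ∀ B ∈ 𝒜, m (A ∪ B) ≤ m A + m B

/-- `m` is null-additive on `𝒜`. -/
def NullAddSF (m : Set T → ℝ) (𝒜 : Set (Set T)) : Prop :=
  ∀ A ∈ 𝒜, ∀ B ∈ 𝒜, m B = 0 → m (A ∪ B) = m A

/-- `m` is finitely additive on `𝒜`. -/
def FinAddSF (m : Set T → ℝ) (𝒜 : Set (Set T)) : Prop :=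
  ∀ A ∈ 𝒜, ∀ B ∈ 𝒜, Disjoint A B → m (A ∪ B) = m A + m B

/-- The variation `m̄` of `m`: supremum of `Σᵢ m(Aᵢ)` over finite pairwise disjoint
families `{Aᵢ} ⊆ 𝒜` with each `Aᵢ ⊆ E`. -/
noncomputable def variationSF (m : Set T → ℝ) (𝒜 : Set (Set T)) (E : Set T) : ℝ≥0∞ :=
  ⨆ F ∈ {F : Finset (Set T) |
      (∀ A ∈ F, A ∈ 𝒜 ∧ A ⊆ E) ∧ (F : Set (Set T)).PairwiseDisjoint id},
    ∑ A ∈ F, ENNReal.ofReal (m A)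

/-- `A` is an atom of `m`. -/
def IsAtomOf (m : Set T → ℝ) (𝒜 : Set (Set T)) (A : Set T) : Prop :=
  A ∈ 𝒜 ∧ 0 < m A ∧ ∀ B ∈ 𝒜, B ⊆ A → m B = 0 ∨ m (A \ B) = 0

/-- A partition of `A` into nonvoid pairwise disjoint members of `𝒜`. -/
def IsPartitionOf (𝒜 : Set (Set T)) (A : Set T) (P : Finset (Set T)) : Prop :=
  (∀ B ∈ P, B ∈ 𝒜 ∧ B.Nonempty ∧ B ⊆ A) ∧
  (P : Set (Set T)).PairwiseDisjoint id ∧ ⋃₀ (P : Set (Set T)) = A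

/-- `Q` is finer than `P`. -/
def RefinesPart (P Q : Finset (Set T)) : Prop := ∀ B ∈ Q, ∃ C ∈ P, B ⊆ C

/-- `f` is `m`-totally-measurable on `B`. -/
def TotallyMeasurableOn {X : Type*} [NormedAddCommGroup X] (m : Set T → ℝ)
    (𝒜 : Set (Set T)) (f : T → X) (B : Set T) : Prop :=
  ∀ ε > 0, ∃ A₀ : Set T, ∃ F : Finset (Set T),
    A₀ ∈ 𝒜 ∧ A₀ ⊆ B ∧ (∀ C ∈ F, C ∈ 𝒜 ∧ C.Nonempty ∧ C ⊆ B) ∧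
    (insert A₀ (F : Set (Set T))).PairwiseDisjoint id ∧
    A₀ ∪ ⋃₀ (F : Set (Set T)) = B ∧
    variationSF m 𝒜 A₀ < ENNReal.ofReal ε ∧
    ∀ C ∈ F, ∀ t ∈ C, ∀ s ∈ C, ‖f t - f s‖ < ε

variable {X : Type*} [NormedAddCommGroup X] [NormedSpace ℝ X]

/-- `f` has Gould integral `α` on `A` w.r.t. `m`: the net of Riemann sums
`σ(P) = Σ_{B ∈ P} m(B) • f(t_B)` over tagged partitions of `A`, ordered by
refinement, converges to `α`. -/
def HasGouldIntegralOn (m : Set T → ℝ) (𝒜 : Set (Set T)) (f : T → X) (A : Set T)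
    (α : X) : Prop :=
  ∀ ε > 0, ∃ P₀, IsPartitionOf 𝒜 A P₀ ∧ ∀ P, IsPartitionOf 𝒜 A P → RefinesPart P₀ P →
    ∀ τ : Set T → T, (∀ B ∈ P, τ B ∈ B) →
      ‖(∑ B ∈ P, m B • f (τ B)) - α‖ < ε

/-- `f` is Gould `m`-integrable on `A`. -/
def GouldIntegrableOn (m : Set T → ℝ) (𝒜 : Set (Set T)) (f : T → X) (A : Set T) : Prop :=
  ∃ α, HasGouldIntegralOn m 𝒜 f A α

/-- If `m` is null-additive and monotone and `A` is an atom, Gould integrability of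
`f` on `A` implies total measurability of `f` on `A`. -/
theorem totallyMeasurable_on_atom_of_gould_integrable
    (𝒜 : Set (Set T)) (m : Set T → ℝ)
    (halg : IsSetAlgebra' 𝒜) (h0 : m ∅ = 0) (hpos : ∀ A ∈ 𝒜, 0 ≤ m A)
    (hnull : NullAddSF m 𝒜) (hmono : MonoSF m 𝒜)
    (A : Set T) (hA : IsAtomOf m 𝒜 A) (f : T → X)
    (hint : GouldIntegrableOn m 𝒜 f A) :

    TotallyMeasurableOn m 𝒜 f A := by
  classical
  obtain ⟨hemp, hcompl, hunion⟩ := halg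
  obtain ⟨hA𝒜, hApos, hatom⟩ := hA
  obtain ⟨α, hα⟩ := hint
  have hdiff : ∀ S ∈ 𝒜, ∀ B ∈ 𝒜, S \ B ∈ 𝒜 := by
    intro S hS B hB
    have h : S \ B = (Sᶜ ∪ B)ᶜ := by
      ext x; simp [Set.diff_eq]
    rw [h]; exact hcompl _ (hunion _ (hcompl _ hS) _ hB)
  intro ε hε
  have hεm : 0 < ε * m A / 2 := by positivity
  obtain ⟨P₀, hP₀, hconv⟩ := hα _ hεm
  obtain ⟨hmem, hdisjP, hcover⟩ := hP₀
  -- a finite union of null sets in 𝒜 is null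
  have hnullU : ∀ (S : Finset (Set T)), (∀ B ∈ S, B ∈ 𝒜 ∧ m B = 0) →
      (⋃₀ (S : Set (Set T)) ∈ 𝒜 ∧ m (⋃₀ (S : Set (Set T))) = 0) := by
    intro S
    induction S using Finset.induction_on with
    | empty =>
      intro _
      simp only [Finset.coe_empty, Set.sUnion_empty]
      exact ⟨hemp, h0⟩
    | insert B S' hnotmem ih =>
      intro hS
      have hB := hS B (Finset.mem_insert_self _ _)
      have hS' := ih (fun C hC => hS C (Finset.mem_insert_of_mem hC))
      have hU : ⋃₀ ((insert B S' : Finset (Set T)) : Set (Set T))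
          = (⋃₀ (S' : Set (Set T))) ∪ B := by
        simp [Set.sUnion_insert, Set.union_comm]
      rw [hU]
      exact ⟨hunion _ hS'.1 _ hB.1, by rw [hnull _ hS'.1 _ hB.1 hB.2]; exact hS'.2⟩
  -- there is an element of P₀ whose complement in A is null
  have hex : ∃ B₀ ∈ P₀, m (A \ B₀) = 0 := by
    by_contra h
    push_neg at h
    have hall : ∀ B ∈ P₀, B ∈ 𝒜 ∧ m B = 0 := by
      intro B hB
      exact ⟨(hmem B hB).1,
        (hatom B (hmem B hB).1 (hmem B hB).2.2).resolve_right (h B hB)⟩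
    have := (hnullU P₀ hall).2
    rw [hcover] at this
    linarith
  obtain ⟨B₀, hB₀P, hB₀null⟩ := hex
  obtain ⟨hB₀𝒜, hB₀ne, hB₀A⟩ := hmem B₀ hB₀P
  have hAdiff𝒜 : A \ B₀ ∈ 𝒜 := hdiff _ hA𝒜 _ hB₀𝒜
  have hmB₀ : m B₀ = m A := by
    have h1 : m (B₀ ∪ (A \ B₀)) = m B₀ := hnull _ hB₀𝒜 _ hAdiff𝒜 hB₀null
    rw [Set.union_diff_cancel hB₀A] at h1
    exact h1.symm
  have hothers : ∀ C ∈ P₀, C ≠ B₀ → m C = 0 := by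
    intro C hC hne
    have hCd : Disjoint C B₀ := hdisjP (Finset.mem_coe.mpr hC) (Finset.mem_coe.mpr hB₀P) hne
    have hCsub : C ⊆ A \ B₀ := by
      intro x hx
      exact ⟨(hmem C hC).2.2 hx, fun hxB => (Set.disjoint_left.mp hCd hx) hxB⟩
    have h1 : m C ≤ m (A \ B₀) := hmono _ (hmem C hC).1 _ hAdiff𝒜 hCsub
    have h2 : 0 ≤ m C := hpos _ (hmem C hC).1
    linarith [hB₀null ▸ h1]
  -- key estimate
  have hkey : ∀ t ∈ B₀, ‖m A • f t - α‖ < ε * m A / 2 := by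
    intro t ht
    set τ : Set T → T := fun B => if B = B₀ then t else
      (if h : B.Nonempty then h.some else t) with hτ
    have htags : ∀ B ∈ P₀, τ B ∈ B := by
      intro B hB
      by_cases hBeq : B = B₀
      · simp only [hτ, hBeq, if_pos rfl]; subst hBeq; exact ht
      · have hBne := (hmem B hB).2.1
        simp only [hτ, if_neg hBeq, dif_pos hBne]
        exact hBne.some_mem
    have hsum : (∑ B ∈ P₀, m B • f (τ B)) = m A • f t := by
      rw [Finset.sum_eq_single_of_mem B₀ hB₀P
        (fun C hC hne => by rw [hothers C hC hne, zero_smul])]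
      simp only [hτ, if_pos rfl, hmB₀]
    have := hconv P₀ ⟨hmem, hdisjP, hcover⟩ (fun B hB => ⟨B, hB, subset_rfl⟩) τ htags
    rwa [hsum] at this
  have hosc : ∀ t ∈ B₀, ∀ s ∈ B₀, ‖f t - f s‖ < ε := by
    intro t ht s hs
    have h1 := hkey t ht
    have h2 := hkey s hs
    have h3 : ‖m A • (f t - f s)‖ < ε * m A := by
      have : m A • (f t - f s) = (m A • f t - α) - (m A • f s - α) := by
        rw [smul_sub]; abel
      rw [this]
      calc ‖(m A • f t - α) - (m A • f s - α)‖
          ≤ ‖m A • f t - α‖ + ‖m A • f s - α‖ := norm_sub_le _ _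
        _ < ε * m A / 2 + ε * m A / 2 := by linarith
        _ = ε * m A := by ring
    rw [norm_smul, Real.norm_eq_abs, abs_of_pos hApos] at h3
    exact (mul_lt_mul_iff_right₀ hApos).mp (by linarith [mul_comm (m A) ε])
  -- variation of A \ B₀ is zero
  have hvar : variationSF m 𝒜 (A \ B₀) = 0 := by
    apply le_antisymm _ zero_le
    apply iSup₂_le
    intro F hF
    apply le_of_eq
    apply Finset.sum_eq_zero
    intro C hC
    have h1 : m C ≤ m (A \ B₀) := hmono _ (hF.1 C hC).1 _ hAdiff𝒜 (hF.1 C hC).2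
    have h2 : 0 ≤ m C := hpos _ (hF.1 C hC).1
    have : m C = 0 := by linarith [hB₀null ▸ h1]
    simp [this]
  refine ⟨A \ B₀, {B₀}, hAdiff𝒜, Set.diff_subset, ?_, ?_, ?_, ?_, ?_⟩
  · intro C hC
    rw [Finset.mem_singleton] at hC
    subst hC
    exact ⟨hB₀𝒜, hB₀ne, hB₀A⟩
  · intro a ha b hb hne
    simp only [Finset.coe_singleton, Set.mem_insert_iff, Set.mem_singleton_iff] at ha hb
    rcases ha with rfl | rfl <;> rcases hb with rfl | rfl
    · exact absurd rfl hne
    · exact Set.disjoint_sdiff_left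
    · exact Set.disjoint_sdiff_left.symm
    · exact absurd rfl hne
  · simp [Set.diff_union_of_subset hB₀A]
  · rw [hvar]
    exact ENNReal.ofReal_pos.mpr hε
  · intro C hC t ht s hs
    rw [Finset.mem_singleton] at hC
    subst hC
    exact hosc t ht s hs
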